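/- Let D be a finite set with |D| = n ≥ 1, let m ≥ 1, let p(n) be the number of integer partitions of n, and let g_1, …, g_{p(n)} ∈ Sym(D) have pairwise distinct cycle types realizing all cycle types in Sym(D). For each r let k_{r1}, …, k_{rℓ_r} be the cycle type of g_r, and let C_{g_r} be the set of permutations in Sym(D) with the same cycle type as g_r. Then the number of m-endomorphisms on D⁺, up to combinatorial equivalence, equals (1/n!) · Σ_{r=1}^{p(n)} |C_{g_r}| · ∏_{i=1}^{ℓ_r} ( Σ_{k=1}^{m} ( Σ_{j | k_{ri}} j·c(g_r, j) )^k ). -/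

import Mathlib

/-- The cycle type of a permutation of a finite set, *including* fixed points as
cycles of length `1`. -/
def fullCycleType {D : Type*} [Fintype D] [DecidableEq D] (g : Equiv.Perm D) : Multiset ℕ :=
  g.cycleType + Multiset.replicate (Fintype.card D - g.support.card) 1

/-- The number of cycles of length `j` in the cycle decomposition of `g`
(fixed points counted as cycles of length `1`). -/
def cycleCount {D : Type*} [Fintype D] [DecidableEq D] (g : Equiv.Perm D) (j : ℕ) : ℕ :=
  Multiset.count j (fullCycleType g)

namespace MEndo
open Equiv Equiv.Perm Finset

variable {D : Type*} [Fintype D] [DecidableEq D]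

/-- The period of a point under a permutation. -/
def pp (σ : Equiv.Perm D) (x : D) : ℕ :=
  if σ x = x then 1 else (σ.cycleOf x).support.card

lemma pp_of_fixed {σ : Equiv.Perm D} {x : D} (hx : σ x = x) : pp σ x = 1 := if_pos hx

lemma pp_of_moved {σ : Equiv.Perm D} {x : D} (hx : σ x ≠ x) :
    pp σ x = (σ.cycleOf x).support.card := if_neg hx

lemma one_le_pp (σ : Equiv.Perm D) (x : D) : 1 ≤ pp σ x := by
  by_cases hx : σ x = x
  · rw [pp_of_fixed hx]
  · rw [pp_of_moved hx]
    have := Equiv.Perm.two_le_card_support_cycleOf_iff (f := σ) (x := x) |>.2 hx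
    omega

lemma mem_support_cycleOf_self {σ : Equiv.Perm D} {x : D} (hx : σ x ≠ x) :
    x ∈ (σ.cycleOf x).support :=
  (Equiv.Perm.mem_support_cycleOf_iff' hx).2 (Equiv.Perm.SameCycle.refl σ x)

lemma pow_apply_eq_iff (σ : Equiv.Perm D) (x : D) (n : ℕ) :
    (σ ^ n) x = x ↔ pp σ x ∣ n := by
  by_cases hx : σ x = x
  · simp [pp_of_fixed hx, Equiv.Perm.pow_apply_eq_self_of_apply_eq_self hx]
  · rw [pp_of_moved hx]
    exact (σ.isCycleOn_support_cycleOf x).pow_apply_eq (mem_support_cycleOf_self hx)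

lemma pp_sameCycle {σ : Equiv.Perm D} {x y : D} (h : σ.SameCycle x y) :
    pp σ x = pp σ y := by
  by_cases hx : σ x = x
  · obtain ⟨i, hi⟩ := h
    rw [Equiv.Perm.zpow_apply_eq_self_of_apply_eq_self hx] at hi
    rw [← hi]
  · have hy : σ y ≠ y := by
      intro hy
      obtain ⟨i, hi⟩ := h.symm
      rw [Equiv.Perm.zpow_apply_eq_self_of_apply_eq_self hy] at hi
      rw [← hi] at hx
      exact hx hy
    rw [pp_of_moved hx, pp_of_moved hy, h.cycleOf_eq]

lemma card_sameCycle_class (σ : Equiv.Perm D) (x : D) :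
    #(univ.filter (fun y => σ.SameCycle x y)) = pp σ x := by
  by_cases hx : σ x = x
  · have h1 : univ.filter (fun y => σ.SameCycle x y) = {x} := by
      ext y
      simp only [mem_filter, mem_univ, true_and, mem_singleton]
      constructor
      · rintro ⟨i, hi⟩
        rw [Equiv.Perm.zpow_apply_eq_self_of_apply_eq_self hx] at hi
        exact hi.symm
      · rintro rfl; exact Equiv.Perm.SameCycle.refl σ _
    rw [h1, card_singleton, pp_of_fixed hx]
  · have h1 : univ.filter (fun y => σ.SameCycle x y) = (σ.cycleOf x).support := by
      ext y
      simp only [mem_filter, mem_univ, true_and]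
      exact (Equiv.Perm.mem_support_cycleOf_iff' hx).symm
    rw [h1, pp_of_moved hx]

lemma count_one_cycleType (σ : Equiv.Perm D) : Multiset.count 1 σ.cycleType = 0 := by
  rw [Multiset.count_eq_zero]
  intro h
  have := Equiv.Perm.two_le_of_mem_cycleType h
  omega

lemma cycleCount_point_card (σ : Equiv.Perm D) (j : ℕ) :
    #(univ.filter (fun x => pp σ x = j)) = j * cycleCount σ j := by
  rcases eq_or_ne j 1 with rfl | hj1
  · have h1 : univ.filter (fun x => pp σ x = 1) = univ.filter (fun x => σ x = x) := by
      ext x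
      simp only [mem_filter, mem_univ, true_and]
      constructor
      · intro h
        by_contra hx
        have h2 := Equiv.Perm.two_le_card_support_cycleOf_iff (f := σ) (x := x) |>.2 hx
        rw [pp_of_moved hx] at h; omega
      · intro h; exact pp_of_fixed h
    have h2 : cycleCount σ 1 = Fintype.card D - σ.support.card := by
      unfold cycleCount fullCycleType
      rw [Multiset.count_add, count_one_cycleType, Multiset.count_replicate, if_pos rfl]
      omega
    have h3 : univ.filter (fun x => σ x = x) = univ \ σ.support := by
      ext x
      simp [Equiv.Perm.mem_support]
    rw [h1, h2, one_mul, h3, card_sdiff_of_subset (subset_univ _), card_univ]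
  · rcases Nat.eq_zero_or_pos j with rfl | hjp
    · have : univ.filter (fun x => pp σ x = 0) = ∅ := by
        ext x
        simp only [mem_filter, mem_univ, true_and, notMem_empty, iff_false]
        have := one_le_pp σ x
        omega
      rw [this, card_empty, zero_mul]
    have hcc : cycleCount σ j = Multiset.count j σ.cycleType := by
      unfold cycleCount fullCycleType
      rw [Multiset.count_add, Multiset.count_replicate, if_neg (Ne.symm hj1), add_zero]
    have hcnt : Multiset.count j σ.cycleType
        = #(σ.cycleFactorsFinset.filter (fun c => #c.support = j)) := by
      rw [Equiv.Perm.cycleType_def, Multiset.count_map]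
      have : Multiset.filter (fun a => j = (card ∘ Equiv.Perm.support) a) σ.cycleFactorsFinset.val
          = Multiset.filter (fun c => #c.support = j) σ.cycleFactorsFinset.val :=
        Multiset.filter_congr (fun c _ => by simp [Function.comp, eq_comm])
      rw [this, ← Finset.filter_val]
      rfl
    have hset : univ.filter (fun x => pp σ x = j)
        = univ.filter (fun x => σ x ≠ x ∧ #((σ.cycleOf x).support) = j) := by
      ext x
      simp only [mem_filter, mem_univ, true_and]
      constructor
      · intro h
        have hx : σ x ≠ x := by
          intro hx; rw [pp_of_fixed hx] at h; exact hj1 h.symm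
        exact ⟨hx, by rwa [pp_of_moved hx] at h⟩
      · rintro ⟨hx, h⟩
        rwa [pp_of_moved hx]
    have hmaps : ∀ x ∈ univ.filter (fun x => σ x ≠ x ∧ #((σ.cycleOf x).support) = j),
        σ.cycleOf x ∈ σ.cycleFactorsFinset.filter (fun c => #c.support = j) := by
      intro x hx
      simp only [mem_filter, mem_univ, true_and] at hx ⊢
      exact ⟨Equiv.Perm.cycleOf_mem_cycleFactorsFinset_iff.2
        (Equiv.Perm.mem_support.2 hx.1), hx.2⟩
    have hfib : ∀ c ∈ σ.cycleFactorsFinset.filter (fun c => #c.support = j),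
        #((univ.filter (fun x => σ x ≠ x ∧ #((σ.cycleOf x).support) = j)).filter
          (fun x => σ.cycleOf x = c)) = j := by
      intro c hc
      simp only [mem_filter] at hc
      have hcs : (univ.filter (fun x => σ x ≠ x ∧ #((σ.cycleOf x).support) = j)).filter
          (fun x => σ.cycleOf x = c) = c.support := by
        ext x
        simp only [mem_filter, mem_univ, true_and]
        constructor
        · rintro ⟨⟨hx, _⟩, h⟩
          rw [← h]
          exact mem_support_cycleOf_self hx
        · intro hx
          have hcx : c = σ.cycleOf x := Equiv.Perm.cycle_is_cycleOf hx hc.1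
          have hxs : x ∈ σ.support := Equiv.Perm.support_cycleOf_le σ x (hcx ▸ hx)
          have hx' : σ x ≠ x := Equiv.Perm.mem_support.1 hxs
          exact ⟨⟨hx', by rw [← hcx]; exact hc.2⟩, hcx.symm⟩
      rw [hcs, hc.2]
    calc #(univ.filter (fun x => pp σ x = j))
        = ∑ c ∈ σ.cycleFactorsFinset.filter (fun c => #c.support = j),
            #((univ.filter (fun x => σ x ≠ x ∧ #((σ.cycleOf x).support) = j)).filter
              (fun x => σ.cycleOf x = c)) := by
          rw [hset]; exact card_eq_sum_card_fiberwise hmaps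
      _ = ∑ _c ∈ σ.cycleFactorsFinset.filter (fun c => #c.support = j), j :=
          Finset.sum_congr rfl hfib
      _ = j * cycleCount σ j := by
          rw [Finset.sum_const, smul_eq_mul, hcc, hcnt, mul_comm]

/-- Lemma A: fixed points of `σ ^ ℓ` counted by divisors. -/
lemma card_fixed_pow (σ : Equiv.Perm D) (ℓ : ℕ) (hℓ : 1 ≤ ℓ) :
    #(univ.filter (fun x => (σ ^ ℓ) x = x)) = ∑ j ∈ ℓ.divisors, j * cycleCount σ j := by
  have hset : univ.filter (fun x => (σ ^ ℓ) x = x) = univ.filter (fun x => pp σ x ∣ ℓ) := by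
    ext x; simp [pow_apply_eq_iff]
  have hmaps : ∀ x ∈ univ.filter (fun x => pp σ x ∣ ℓ), pp σ x ∈ ℓ.divisors := by
    intro x hx
    simp only [mem_filter, mem_univ, true_and] at hx
    exact Nat.mem_divisors.2 ⟨hx, by omega⟩
  have hfib : ∀ j ∈ ℓ.divisors,
      #((univ.filter (fun x => pp σ x ∣ ℓ)).filter (fun x => pp σ x = j))
        = j * cycleCount σ j := by
    intro j hj
    rw [Nat.mem_divisors] at hj
    have : (univ.filter (fun x => pp σ x ∣ ℓ)).filter (fun x => pp σ x = j)
        = univ.filter (fun x => pp σ x = j) := by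
      ext x
      simp only [mem_filter, mem_univ, true_and]
      exact ⟨fun h => h.2, fun h => ⟨h ▸ hj.1, h⟩⟩
    rw [this, cycleCount_point_card]
  rw [hset, card_eq_sum_card_fiberwise hmaps]
  exact Finset.sum_congr rfl hfib

def scSetoid (σ : Equiv.Perm D) : Setoid D :=
  ⟨σ.SameCycle, ⟨fun x => Equiv.Perm.SameCycle.refl σ x, fun h => h.symm, fun h1 h2 => h1.trans h2⟩⟩

lemma sc_out_sameCycle (σ : Equiv.Perm D) (d : D) :
    σ.SameCycle (Quotient.mk (scSetoid σ) d).out d :=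
  @Quotient.mk_out D (scSetoid σ) d

lemma cycleCount_orbit_card (σ : Equiv.Perm D) [Fintype (Quotient (scSetoid σ))] (j : ℕ) :
    #(univ.filter (fun x : D => pp σ x = j))
      = j * #(univ.filter (fun ω : Quotient (scSetoid σ) => pp σ ω.out = j)) := by
  classical
  have hmaps : ∀ x ∈ univ.filter (fun x : D => pp σ x = j),
      Quotient.mk (scSetoid σ) x
        ∈ univ.filter (fun ω : Quotient (scSetoid σ) => pp σ ω.out = j) := by
    intro x hx
    simp only [mem_filter, mem_univ, true_and] at hx ⊢
    rw [pp_sameCycle (sc_out_sameCycle σ x)]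
    exact hx
  rw [card_eq_sum_card_fiberwise hmaps]
  have hfib : ∀ ω ∈ univ.filter (fun ω : Quotient (scSetoid σ) => pp σ ω.out = j),
      #((univ.filter (fun x : D => pp σ x = j)).filter
        (fun x => Quotient.mk (scSetoid σ) x = ω)) = j := by
    intro ω hω
    simp only [mem_filter, mem_univ, true_and] at hω
    have hset : (univ.filter (fun x : D => pp σ x = j)).filter
        (fun x => Quotient.mk (scSetoid σ) x = ω)
        = univ.filter (fun y => σ.SameCycle ω.out y) := by
      ext x
      simp only [mem_filter, mem_univ, true_and]
      constructor
      · rintro ⟨_, h⟩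
        have : Quotient.mk (scSetoid σ) x = Quotient.mk (scSetoid σ) ω.out := by
          rw [h, @Quotient.out_eq D (scSetoid σ) ω]
        exact (@Quotient.eq D (scSetoid σ) x ω.out |>.1 this).symm
      · intro h
        constructor
        · rw [← pp_sameCycle h, hω]
        · rw [← @Quotient.out_eq D (scSetoid σ) ω]
          exact @Quotient.sound D (scSetoid σ) _ _ h.symm
    rw [hset, card_sameCycle_class, hω]
  rw [Finset.sum_congr rfl hfib, Finset.sum_const, smul_eq_mul, mul_comm]

lemma cycleCount_eq_card_orbits (σ : Equiv.Perm D) [Fintype (Quotient (scSetoid σ))] (j : ℕ) :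
    cycleCount σ j = #(univ.filter (fun ω : Quotient (scSetoid σ) => pp σ ω.out = j)) := by
  rcases Nat.eq_zero_or_pos j with rfl | hj
  · have h1 : cycleCount σ 0 = 0 := by
      unfold cycleCount fullCycleType
      rw [Multiset.count_add, Multiset.count_replicate, if_neg (by omega)]
      rw [Multiset.count_eq_zero.2 (fun h => by have := Equiv.Perm.two_le_of_mem_cycleType h; omega)]
    rw [h1]
    symm
    rw [Finset.card_eq_zero, Finset.filter_eq_empty_iff]
    intro ω _
    have := one_le_pp σ ω.out
    omega
  · have := cycleCount_orbit_card σ (D := D) j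
    rw [cycleCount_point_card] at this
    exact Nat.eq_of_mul_eq_mul_left hj this

lemma fullCycleType_eq_map (σ : Equiv.Perm D) [Fintype (Quotient (scSetoid σ))] :
    fullCycleType σ
      = (univ : Finset (Quotient (scSetoid σ))).val.map (fun ω => pp σ ω.out) := by
  ext j
  rw [Multiset.count_map]
  have : Multiset.filter (fun ω => j = pp σ ω.out)
        (univ : Finset (Quotient (scSetoid σ))).val
      = (univ.filter (fun ω : Quotient (scSetoid σ) => pp σ ω.out = j)).val := by
    rw [Finset.filter_val]
    exact Multiset.filter_congr (fun ω _ => by constructor <;> (intro h; exact h.symm))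
  rw [this]
  exact cycleCount_eq_card_orbits σ j

lemma equivariant_pow {W : Type*} {σ : Equiv.Perm D} {τ : Equiv.Perm W} {f : D → W}
    (hf : ∀ d, f (σ d) = τ (f d)) : ∀ (k : ℕ) (d : D),
    f ((σ ^ k) d) = (τ ^ k) (f d) := by
  intro k
  induction k with
  | zero => intro d; simp
  | succ k ih =>
      intro d
      have h1 : (σ ^ (k + 1)) d = (σ ^ k) (σ d) := by
        rw [pow_succ]; rfl
      rw [h1, ih (σ d), hf d, ← Equiv.Perm.mul_apply, ← pow_succ]

lemma wd_aux {W : Type*} (σ : Equiv.Perm D) (τ : Equiv.Perm W) (x : D) (w : W)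
    (hw : (τ ^ pp σ x) w = w) {a b : ℕ} (hba : b ≤ a) (hab : (σ ^ a) x = (σ ^ b) x) :
    (τ ^ a) w = (τ ^ b) w := by
  have h1 : (σ ^ b) ((σ ^ (a - b)) x) = (σ ^ b) x := by
    rw [← Equiv.Perm.mul_apply, ← pow_add]
    rwa [Nat.add_sub_cancel' hba]
  have h2 : (σ ^ (a - b)) x = x := (σ ^ b).injective h1
  obtain ⟨t, ht⟩ := (pow_apply_eq_iff σ x (a - b)).1 h2
  have h3 : (τ ^ (a - b)) w = w := by
    rw [ht, pow_mul]
    exact Equiv.Perm.pow_apply_eq_self_of_apply_eq_self hw t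
  calc (τ ^ a) w = (τ ^ (b + (a - b))) w := by rw [Nat.add_sub_cancel' hba]
    _ = (τ ^ b) ((τ ^ (a - b)) w) := by rw [pow_add]; rfl
    _ = (τ ^ b) w := by rw [h3]

lemma wd {W : Type*} (σ : Equiv.Perm D) (τ : Equiv.Perm W) (x : D) (w : W)
    (hw : (τ ^ pp σ x) w = w) {a b : ℕ} (hab : (σ ^ a) x = (σ ^ b) x) :
    (τ ^ a) w = (τ ^ b) w := by
  rcases le_total b a with h | h
  · exact wd_aux σ τ x w hw h hab
  · exact (wd_aux σ τ x w hw h hab.symm).symm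

theorem card_equivariant (σ : Equiv.Perm D) {W : Type*} (τ : Equiv.Perm W)
    [Fintype (Quotient (scSetoid σ))] :
    Nat.card {f : D → W // ∀ d, f (σ d) = τ (f d)} =
      ∏ ω : Quotient (scSetoid σ), Nat.card {w : W // (τ ^ (pp σ ω.out)) w = w} := by
  have key : ∀ d : D, ∃ k : ℕ, (σ ^ k) ((Quotient.mk (scSetoid σ) d).out) = d := by
    intro d
    obtain ⟨i, _, _, hi⟩ := (sc_out_sameCycle σ d).exists_pow_eq σ
    exact ⟨i, hi⟩
  classical
  set kk : D → ℕ := fun d => (key d).choose with hkk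
  have hk : ∀ d, (σ ^ kk d) ((Quotient.mk (scSetoid σ) d).out) = d := fun d => (key d).choose_spec
  set Φ : {f : D → W // ∀ d, f (σ d) = τ (f d)} →
      ∀ ω : Quotient (scSetoid σ), {w : W // (τ ^ (pp σ ω.out)) w = w} :=
    fun f ω => ⟨f.1 ω.out, by
      have h1 : (σ ^ pp σ ω.out) ω.out = ω.out := (pow_apply_eq_iff σ _ _).2 dvd_rfl
      have h2 := equivariant_pow f.2 (pp σ ω.out) ω.out
      rw [h1] at h2
      exact h2.symm⟩ with hΦ
  have hinj : Function.Injective Φ := by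
    intro f g h
    ext d
    have h1 : f.1 ((Quotient.mk (scSetoid σ) d).out) = g.1 ((Quotient.mk (scSetoid σ) d).out) :=
      congrArg Subtype.val (congrFun h (Quotient.mk (scSetoid σ) d))
    calc f.1 d = f.1 ((σ ^ kk d) ((Quotient.mk (scSetoid σ) d).out)) := by rw [hk]
      _ = (τ ^ kk d) (f.1 ((Quotient.mk (scSetoid σ) d).out)) := equivariant_pow f.2 _ _
      _ = (τ ^ kk d) (g.1 ((Quotient.mk (scSetoid σ) d).out)) := by rw [h1]
      _ = g.1 ((σ ^ kk d) ((Quotient.mk (scSetoid σ) d).out)) := (equivariant_pow g.2 _ _).symm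
      _ = g.1 d := by rw [hk]
  have hsurj : Function.Surjective Φ := by
    intro v
    refine ⟨⟨fun d => (τ ^ kk d) (v (Quotient.mk (scSetoid σ) d)).1, ?_⟩, ?_⟩
    · intro d
      have hq : Quotient.mk (scSetoid σ) (σ d) = Quotient.mk (scSetoid σ) d :=
        @Quotient.sound D (scSetoid σ) _ _ (⟨-1, by simp⟩ : σ.SameCycle (σ d) d)
      have hv : (v (Quotient.mk (scSetoid σ) (σ d))).1 = (v (Quotient.mk (scSetoid σ) d)).1 :=
        congrArg (fun q => (v q).1) hq
      show (τ ^ kk (σ d)) (v (Quotient.mk (scSetoid σ) (σ d))).1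
        = τ ((τ ^ kk d) (v (Quotient.mk (scSetoid σ) d)).1)
      rw [hv]
      have hx1 : (σ ^ kk (σ d)) ((Quotient.mk (scSetoid σ) d).out) = σ d := by
        have := hk (σ d); rwa [hq] at this
      have hx2 : (σ ^ (kk d + 1)) ((Quotient.mk (scSetoid σ) d).out) = σ d := by
        rw [pow_succ']
        have : (σ * σ ^ kk d) ((Quotient.mk (scSetoid σ) d).out)
            = σ ((σ ^ kk d) ((Quotient.mk (scSetoid σ) d).out)) := rfl
        rw [this, hk]
      have := wd σ τ ((Quotient.mk (scSetoid σ) d).out) (v (Quotient.mk (scSetoid σ) d)).1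
        (v (Quotient.mk (scSetoid σ) d)).2 (hx1.trans hx2.symm)
      rw [this, pow_succ']
      rfl
    · funext ω
      apply Subtype.ext
      show (τ ^ kk ω.out) (v (Quotient.mk (scSetoid σ) ω.out)).1 = (v ω).1
      have hq : Quotient.mk (scSetoid σ) ω.out = ω := @Quotient.out_eq D (scSetoid σ) ω
      have hv : (v (Quotient.mk (scSetoid σ) ω.out)).1 = (v ω).1 :=
        congrArg (fun q => (v q).1) hq
      rw [hv]
      have hx1 : (σ ^ kk ω.out) ((Quotient.mk (scSetoid σ) ω.out).out) = ω.out := hk ω.out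
      rw [hq] at hx1
      have hx2 : (σ ^ (0 : ℕ)) ω.out = ω.out := rfl
      have := wd σ τ ω.out (v ω).1 (v ω).2 (hx1.trans hx2.symm)
      rw [this]
      rfl
  rw [Nat.card_eq_of_bijective Φ ⟨hinj, hsurj⟩, Nat.card_pi]
lemma fsMap_mk {α β : Type*} (f : α → β) (x : α) (L : List α) :
    FreeSemigroup.map f ⟨x, L⟩ = ⟨f x, L.map f⟩ := by
  induction L generalizing x with
  | nil => rfl
  | cons h t ih =>
      have h1 : (⟨x, h :: t⟩ : FreeSemigroup α) = FreeSemigroup.of x * ⟨h, t⟩ := rfl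
      rw [h1, map_mul, FreeSemigroup.map_of, ih]
      rfl

lemma list_map_eq_self {α : Type*} (f : α → α) :
    ∀ (l : List α), l.map f = l ↔ ∀ x ∈ l, f x = x
  | [] => by simp
  | a :: t => by simp [list_map_eq_self f t]

lemma finite_list_le (N : ℕ) : Finite {l : List D // l.length ≤ N} := by
  refine Finite.of_injective (fun l => (fun i : Fin N => l.1[(i : ℕ)]?)) ?_
  intro l1 l2 h
  apply Subtype.ext
  apply List.ext_getElem?
  intro n
  by_cases hn : n < N
  · exact congrFun h ⟨n, hn⟩
  · have h1 : l1.1.length ≤ n := le_trans l1.2 (not_lt.1 hn)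
    have h2 : l2.1.length ≤ n := le_trans l2.2 (not_lt.1 hn)
    rw [List.getElem?_eq_none_iff.2 h1, List.getElem?_eq_none_iff.2 h2]

lemma finite_W (m : ℕ) : Finite {w : FreeSemigroup D // w.length ≤ m} := by
  haveI := finite_list_le (D := D) m
  refine Finite.of_injective (fun w =>
    ((w.1.head, ⟨w.1.tail, ?_⟩) : D × {l : List D // l.length ≤ m})) ?_
  · have := w.2
    unfold FreeSemigroup.length at this
    omega
  · intro w1 w2 h
    simp only [Prod.mk.injEq, Subtype.mk.injEq] at h
    exact Subtype.ext (FreeSemigroup.ext h.1 h.2)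

lemma card_lists_le (p : D → Prop) [DecidablePred p] : ∀ N : ℕ,
    Nat.card {l : List D // l.length ≤ N ∧ ∀ x ∈ l, p x}
      = ∑ t ∈ range (N + 1), (Nat.card {x : D // p x}) ^ t
  | 0 => by
      haveI : Unique {l : List D // l.length ≤ 0 ∧ ∀ x ∈ l, p x} :=
        { default := ⟨[], by simp⟩
          uniq := fun a => Subtype.ext (List.eq_nil_of_length_eq_zero
            (Nat.le_zero.mp a.2.1)) }
      rw [Nat.card_unique]
      simp
  | (N+1) => by
      haveI hfin0 := finite_list_le (D := D) N
      haveI hfin : Finite {l : List D // l.length ≤ N ∧ ∀ x ∈ l, p x} :=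
        Finite.of_injective
          (fun l => (⟨l.1, l.2.1⟩ : {l : List D // l.length ≤ N}))
          (by
            intro a b h
            have h2 : (a.1 : List D) = b.1 :=
              congrArg (fun z : {l : List D // l.length ≤ N} => z.1) h
            exact Subtype.ext h2)
      set g : Option ({x : D // p x} × {l : List D // l.length ≤ N ∧ ∀ x ∈ l, p x}) →
          {l : List D // l.length ≤ N + 1 ∧ ∀ x ∈ l, p x} :=
        fun o => match o with
          | none => ⟨[], by simp⟩
          | some (a, l) => ⟨a.1 :: l.1, by
              refine ⟨by simpa using l.2.1, ?_⟩
              intro x hx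
              rcases List.mem_cons.1 hx with rfl | hx
              · exact a.2
              · exact l.2.2 x hx⟩ with hg
      have hbij : Function.Bijective g := by
        constructor
        · rintro (_ | ⟨a1, l1⟩) (_ | ⟨a2, l2⟩) h <;>
            simp only [hg, Subtype.mk.injEq] at h
          · rfl
          · exact absurd h (by simp)
          · exact absurd h (by simp)
          · simp only [List.cons.injEq] at h
            congr 1
            exact Prod.ext (Subtype.ext h.1) (Subtype.ext h.2)
        · rintro ⟨l, hl⟩
          match l with
          | [] => exact ⟨none, rfl⟩
          | a :: t =>
              refine ⟨some (⟨a, hl.2 a List.mem_cons_self⟩,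
                ⟨t, ⟨?_, fun x hx => hl.2 x (List.mem_cons_of_mem a hx)⟩⟩), rfl⟩
              have := hl.1
              simp only [List.length_cons] at this
              omega
      rw [← Nat.card_eq_of_bijective g hbij, Finite.card_option, Nat.card_prod,
        card_lists_le p N]
      rw [Finset.sum_range_succ' _ (N + 1)]
      simp [Finset.mul_sum, ← pow_succ']

lemma card_word_fixed (m : ℕ) (hm : 1 ≤ m) (h : Equiv.Perm D) :
    Nat.card {w : FreeSemigroup D // w.length ≤ m ∧ FreeSemigroup.map ⇑h w = w}
      = ∑ k ∈ Finset.Icc 1 m, (Nat.card {x : D // h x = x}) ^ k := by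
  classical
  set g : {x : D // h x = x} × {l : List D // l.length ≤ m - 1 ∧ ∀ x ∈ l, h x = x} →
      {w : FreeSemigroup D // w.length ≤ m ∧ FreeSemigroup.map ⇑h w = w} :=
    fun al => ⟨⟨al.1.1, al.2.1⟩, by
      constructor
      · have := al.2.2.1
        unfold FreeSemigroup.length
        simp only
        omega
      · rw [fsMap_mk, al.1.2, (list_map_eq_self ⇑h al.2.1).2 al.2.2.2]⟩ with hg
  have hbij : Function.Bijective g := by
    constructor
    · rintro ⟨a1, l1⟩ ⟨a2, l2⟩ hyp
      simp only [hg, Subtype.mk.injEq, FreeSemigroup.mk.injEq] at hyp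
      exact Prod.ext (Subtype.ext hyp.1) (Subtype.ext hyp.2)
    · rintro ⟨⟨a, t⟩, ⟨hlen, hfix⟩⟩
      rw [fsMap_mk, FreeSemigroup.mk.injEq] at hfix
      unfold FreeSemigroup.length at hlen
      simp only at hlen
      refine ⟨(⟨a, hfix.1⟩, ⟨t, ⟨by omega, (list_map_eq_self ⇑h t).1 hfix.2⟩⟩), rfl⟩
  rw [← Nat.card_eq_of_bijective g hbij, Nat.card_prod, card_lists_le]
  have hm1 : m - 1 + 1 = m := by omega
  rw [hm1]
  rw [← Finset.Ico_add_one_right_eq_Icc, Finset.sum_Ico_eq_sum_range]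
  simp [Finset.mul_sum, ← pow_succ', Nat.add_comm 1]


/-! ### The action on bounded endomorphisms -/

lemma fsmap_comp {α β γ : Type*} (f : β → γ) (g : α → β) :
    (FreeSemigroup.map f).comp (FreeSemigroup.map g) = FreeSemigroup.map (f ∘ g) :=
  FreeSemigroup.hom_ext (funext fun x => by
    simp [MulHom.comp_apply, FreeSemigroup.map_of, Function.comp])

lemma fsmap_map {α β γ : Type*} (f : β → γ) (g : α → β) (w : FreeSemigroup α) :
    FreeSemigroup.map f (FreeSemigroup.map g w) = FreeSemigroup.map (f ∘ g) w :=
  DFunLike.congr_fun (fsmap_comp f g) w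

lemma fsmap_id {α : Type*} : FreeSemigroup.map (id : α → α) = MulHom.id (FreeSemigroup α) :=
  FreeSemigroup.hom_ext (funext fun x => rfl)

@[simp] lemma fsmap_id_apply {α : Type*} (w : FreeSemigroup α) :
    FreeSemigroup.map (id : α → α) w = w :=
  DFunLike.congr_fun fsmap_id w

instance actS (m : ℕ) :
    MulAction (Equiv.Perm D)
      {φ : FreeSemigroup D →ₙ* FreeSemigroup D //
        ∀ d : D, (φ (FreeSemigroup.of d)).length ≤ m} where
  smul e φ := ⟨((FreeSemigroup.map ⇑e).comp φ.1).comp (FreeSemigroup.map ⇑e⁻¹), by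
    intro d
    show ((FreeSemigroup.map ⇑e)
      (φ.1 ((FreeSemigroup.map ⇑e⁻¹) (FreeSemigroup.of d)))).length ≤ m
    rw [FreeSemigroup.map_of, FreeSemigroup.length_map]
    exact φ.2 _⟩
  one_smul φ := by
    apply Subtype.ext
    apply FreeSemigroup.hom_ext
    funext d
    show (FreeSemigroup.map ⇑(1 : Equiv.Perm D))
        (φ.1 ((FreeSemigroup.map ⇑(1 : Equiv.Perm D)⁻¹) (FreeSemigroup.of d)))
      = φ.1 (FreeSemigroup.of d)
    simp [inv_one, Equiv.Perm.coe_one]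
  mul_smul e f φ := by
    apply Subtype.ext
    apply FreeSemigroup.hom_ext
    funext d
    show (FreeSemigroup.map ⇑(e * f))
        (φ.1 ((FreeSemigroup.map ⇑(e * f)⁻¹) (FreeSemigroup.of d)))
      = (FreeSemigroup.map ⇑e)
          ((FreeSemigroup.map ⇑f)
            (φ.1 ((FreeSemigroup.map ⇑f⁻¹) ((FreeSemigroup.map ⇑e⁻¹) (FreeSemigroup.of d)))))
    simp [mul_inv_rev, Equiv.Perm.coe_mul, FreeSemigroup.map_of, fsmap_map, Function.comp]

lemma smul_def (m : ℕ) (e : Equiv.Perm D)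
    (φ : {φ : FreeSemigroup D →ₙ* FreeSemigroup D //
      ∀ d : D, (φ (FreeSemigroup.of d)).length ≤ m}) :
    (e • φ).1 = ((FreeSemigroup.map ⇑e).comp φ.1).comp (FreeSemigroup.map ⇑e⁻¹) := rfl

lemma map_inv_comp (e : Equiv.Perm D) :
    (FreeSemigroup.map ⇑e⁻¹).comp (FreeSemigroup.map ⇑e) = MulHom.id (FreeSemigroup D) := by
  rw [fsmap_comp]
  have : (⇑e⁻¹ ∘ ⇑e) = (id : D → D) := funext fun x => e.symm_apply_apply x
  rw [this, fsmap_id]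

lemma map_comp_inv (e : Equiv.Perm D) :
    (FreeSemigroup.map ⇑e).comp (FreeSemigroup.map ⇑e⁻¹) = MulHom.id (FreeSemigroup D) := by
  rw [fsmap_comp]
  have : (⇑e ∘ ⇑e⁻¹) = (id : D → D) := funext fun x => e.apply_symm_apply x
  rw [this, fsmap_id]

lemma smul_eq_iff (m : ℕ) (e : Equiv.Perm D)
    (φ ψ : {φ : FreeSemigroup D →ₙ* FreeSemigroup D //
      ∀ d : D, (φ (FreeSemigroup.of d)).length ≤ m}) :
    e • φ = ψ ↔ (FreeSemigroup.map ⇑e).comp φ.1 = ψ.1.comp (FreeSemigroup.map ⇑e) := by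
  rw [Subtype.ext_iff, smul_def]
  constructor
  · intro h
    rw [← h, MulHom.comp_assoc, map_inv_comp, MulHom.comp_id]
  · intro h
    rw [h, MulHom.comp_assoc, map_comp_inv, MulHom.comp_id]

/-- The permutation of bounded words induced by a permutation of letters. -/
def permW (m : ℕ) (e : Equiv.Perm D) : Equiv.Perm {w : FreeSemigroup D // w.length ≤ m} where
  toFun w := ⟨FreeSemigroup.map ⇑e w.1, by rw [FreeSemigroup.length_map]; exact w.2⟩
  invFun w := ⟨FreeSemigroup.map ⇑e⁻¹ w.1, by rw [FreeSemigroup.length_map]; exact w.2⟩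
  left_inv w := Subtype.ext (by
    show FreeSemigroup.map ⇑e⁻¹ (FreeSemigroup.map ⇑e w.1) = w.1
    rw [fsmap_map]
    have : (⇑e⁻¹ ∘ ⇑e) = (id : D → D) := funext fun x => e.symm_apply_apply x
    rw [this, fsmap_id_apply])
  right_inv w := Subtype.ext (by
    show FreeSemigroup.map ⇑e (FreeSemigroup.map ⇑e⁻¹ w.1) = w.1
    rw [fsmap_map]
    have : (⇑e ∘ ⇑e⁻¹) = (id : D → D) := funext fun x => e.apply_symm_apply x
    rw [this, fsmap_id_apply])

lemma permW_apply (m : ℕ) (e : Equiv.Perm D) (w : {w : FreeSemigroup D // w.length ≤ m}) :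
    ((permW m e w : {w : FreeSemigroup D // w.length ≤ m}) : FreeSemigroup D)
      = FreeSemigroup.map ⇑e w.1 := rfl

lemma permW_pow (m : ℕ) (e : Equiv.Perm D) (ℓ : ℕ) :
    (permW m e) ^ ℓ = permW m (e ^ ℓ) := by
  induction ℓ with
  | zero =>
      apply Equiv.ext
      intro w
      apply Subtype.ext
      show w.1 = FreeSemigroup.map ⇑((1 : Equiv.Perm D)) w.1
      simp [Equiv.Perm.coe_one]
  | succ ℓ ih =>
      apply Equiv.ext
      intro w
      apply Subtype.ext
      rw [pow_succ']
      show FreeSemigroup.map ⇑e (((permW m e) ^ ℓ) w).1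
        = FreeSemigroup.map ⇑(e ^ (ℓ + 1)) w.1
      rw [ih]
      show FreeSemigroup.map ⇑e (FreeSemigroup.map ⇑(e ^ ℓ) w.1)
        = FreeSemigroup.map ⇑(e ^ (ℓ + 1)) w.1
      rw [fsmap_map, pow_succ' e, Equiv.Perm.coe_mul]

/-- Identification of the fixed points of the action with equivariant maps. -/
def fixedEquiv (m : ℕ) (e : Equiv.Perm D) :
    ↥(MulAction.fixedBy
        {φ : FreeSemigroup D →ₙ* FreeSemigroup D //
          ∀ d : D, (φ (FreeSemigroup.of d)).length ≤ m} e) ≃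
    {f : D → {w : FreeSemigroup D // w.length ≤ m} //
      ∀ d, f (e d) = permW m e (f d)} where
  toFun φ := ⟨fun d => ⟨φ.1.1 (FreeSemigroup.of d), φ.1.2 d⟩, by
    intro d
    have h1 : (FreeSemigroup.map ⇑e).comp φ.1.1 = φ.1.1.comp (FreeSemigroup.map ⇑e) :=
      (smul_eq_iff m e φ.1 φ.1).1 φ.2
    have h2 := DFunLike.congr_fun h1 (FreeSemigroup.of d)
    simp only [MulHom.comp_apply, FreeSemigroup.map_of] at h2
    exact Subtype.ext h2.symm⟩
  invFun f := ⟨⟨FreeSemigroup.lift (fun d => (f.1 d).1), by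
      intro d
      rw [FreeSemigroup.lift_of]
      exact (f.1 d).2⟩, by
    rw [MulAction.mem_fixedBy, smul_eq_iff]
    apply FreeSemigroup.hom_ext
    funext d
    show FreeSemigroup.map ⇑e (FreeSemigroup.lift (fun d => (f.1 d).1) (FreeSemigroup.of d))
      = FreeSemigroup.lift (fun d => (f.1 d).1) (FreeSemigroup.of (e d))
    rw [FreeSemigroup.lift_of, FreeSemigroup.lift_of, f.2 d]
    rfl⟩
  left_inv φ := by
    apply Subtype.ext
    apply Subtype.ext
    apply FreeSemigroup.hom_ext
    funext d
    exact FreeSemigroup.lift_of _ d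
  right_inv f := by
    apply Subtype.ext
    funext d
    apply Subtype.ext
    exact FreeSemigroup.lift_of _ d

lemma card_fixed_words (m : ℕ) (hm : 1 ≤ m) (h : Equiv.Perm D) :
    Nat.card {w : {w : FreeSemigroup D // w.length ≤ m} // permW m h w = w}
      = ∑ k ∈ Finset.Icc 1 m, (Nat.card {x : D // h x = x}) ^ k := by
  rw [← card_word_fixed m hm h]
  apply Nat.card_congr
  refine (Equiv.subtypeEquivRight ?_).trans
    (Equiv.subtypeSubtypeEquivSubtypeInter
      (fun w : FreeSemigroup D => w.length ≤ m)
      (fun w => FreeSemigroup.map ⇑h w = w))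
  intro w
  rw [Subtype.ext_iff]
  rfl

/-- Cardinality of the fixed-point set of `e` acting on bounded endomorphisms. -/
lemma card_fixedBy_eq (m : ℕ) (hm : 1 ≤ m) (e : Equiv.Perm D) :
    Nat.card ↥(MulAction.fixedBy
        {φ : FreeSemigroup D →ₙ* FreeSemigroup D //
          ∀ d : D, (φ (FreeSemigroup.of d)).length ≤ m} e)
      = ((fullCycleType e).map (fun ℓ =>
          ∑ k ∈ Finset.Icc 1 m, (∑ j ∈ ℓ.divisors, j * cycleCount e j) ^ k)).prod := by
  classical
  letI : Fintype (Quotient (scSetoid e)) := Fintype.ofFinite _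
  rw [Nat.card_congr (fixedEquiv m e), card_equivariant e (permW m e)]
  rw [fullCycleType_eq_map e, Multiset.map_map, ← Finset.prod_eq_multiset_prod]
  refine Finset.prod_congr rfl ?_
  intro ω _
  simp only [Function.comp]
  rw [permW_pow]
  rw [card_fixed_words m hm (e ^ pp e ω.out)]
  refine Finset.sum_congr rfl ?_
  intro k _
  congr 1
  rw [Nat.card_eq_fintype_card, Fintype.card_subtype]
  exact card_fixed_pow e (pp e ω.out) (one_le_pp e ω.out)

/-- Identification with functions to bounded words. -/
def SEquiv (m : ℕ) :
    {φ : FreeSemigroup D →ₙ* FreeSemigroup D //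
      ∀ d : D, (φ (FreeSemigroup.of d)).length ≤ m}
      ≃ (D → {w : FreeSemigroup D // w.length ≤ m}) where
  toFun φ := fun d => ⟨φ.1 (FreeSemigroup.of d), φ.2 d⟩
  invFun f := ⟨FreeSemigroup.lift (fun d => (f d).1), by
    intro d; rw [FreeSemigroup.lift_of]; exact (f d).2⟩
  left_inv φ := Subtype.ext (FreeSemigroup.hom_ext (funext fun d => FreeSemigroup.lift_of _ d))
  right_inv f := funext fun d => Subtype.ext (FreeSemigroup.lift_of _ d)

lemma finite_S (m : ℕ) :
    Finite {φ : FreeSemigroup D →ₙ* FreeSemigroup D //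
      ∀ d : D, (φ (FreeSemigroup.of d)).length ≤ m} := by
  haveI := finite_W (D := D) m
  exact Finite.of_equiv _ (SEquiv m).symm

end MEndo

open Finset MEndo


/-- **Corollary 1.** Let `|D| = n ≥ 1`, let `p(n)` be the number of integer partitions of `n`,
and let `g_1, …, g_{p(n)} ∈ Sym(D)` have pairwise distinct cycle types, realizing all cycle
types.  Writing `C_{g_r}` for the set of permutations with the same cycle type as `g_r`, the
number of `m`-endomorphisms on `D⁺` up to combinatorial equivalence is
`(1/n!) · Σ_{r=1}^{p(n)} |C_{g_r}| · ∏_{cycle lengths kᵢ of g_r}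
  (Σ_{k=1}^m (Σ_{j ∣ kᵢ} j·c(g_r,j))^k)`. -/

theorem number_of_m_endomorphisms_via_partitions
    {D : Type*} [Fintype D] [DecidableEq D] {n m : ℕ} (hn : 1 ≤ n) (hm : 1 ≤ m)
    (hcard : Fintype.card D = n)
    (g : Fin (Fintype.card (Nat.Partition n)) → Equiv.Perm D)
    (hdistinct : ∀ r s, r ≠ s → fullCycleType (g r) ≠ fullCycleType (g s))
    (hall : ∀ h : Equiv.Perm D, ∃ r, fullCycleType h = fullCycleType (g r)) :
    (Nat.card (Quot (fun φ ψ : {φ : FreeSemigroup D →ₙ* FreeSemigroup D //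
          ∀ d : D, (φ (FreeSemigroup.of d)).length ≤ m} =>
        ∃ e : Equiv.Perm D,
          (ψ : FreeSemigroup D →ₙ* FreeSemigroup D).comp (FreeSemigroup.map ⇑e)
            = (FreeSemigroup.map ⇑e).comp
                (φ : FreeSemigroup D →ₙ* FreeSemigroup D))) : ℚ)
      = (1 / (n.factorial : ℚ)) * ∑ r : Fin (Fintype.card (Nat.Partition n)),
          ((Nat.card {h : Equiv.Perm D // fullCycleType h = fullCycleType (g r)} : ℚ) *
            ((((fullCycleType (g r)).map (fun ki =>
              ∑ k ∈ Finset.Icc 1 m,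
                (∑ j ∈ ki.divisors, j * cycleCount (g r) j) ^ k)).prod : ℕ) : ℚ)) := by
  classical
  haveI hSfin : Finite {φ : FreeSemigroup D →ₙ* FreeSemigroup D //
      ∀ d : D, (φ (FreeSemigroup.of d)).length ≤ m} := finite_S m
  letI : Fintype {φ : FreeSemigroup D →ₙ* FreeSemigroup D //
      ∀ d : D, (φ (FreeSemigroup.of d)).length ≤ m} := Fintype.ofFinite _
  letI : ∀ e : Equiv.Perm D, Fintype ↥(MulAction.fixedBy
      {φ : FreeSemigroup D →ₙ* FreeSemigroup D //
        ∀ d : D, (φ (FreeSemigroup.of d)).length ≤ m} e) := fun e => Fintype.ofFinite _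
  letI : Fintype (Quotient (MulAction.orbitRel (Equiv.Perm D)
      {φ : FreeSemigroup D →ₙ* FreeSemigroup D //
        ∀ d : D, (φ (FreeSemigroup.of d)).length ≤ m})) := Fintype.ofFinite _
  have hb := MulAction.sum_card_fixedBy_eq_card_orbits_mul_card_group (Equiv.Perm D)
    {φ : FreeSemigroup D →ₙ* FreeSemigroup D //
      ∀ d : D, (φ (FreeSemigroup.of d)).length ≤ m}
  -- identify the Quot with the orbit quotient
  have hquot : Nat.card (Quot (fun φ ψ : {φ : FreeSemigroup D →ₙ* FreeSemigroup D //
          ∀ d : D, (φ (FreeSemigroup.of d)).length ≤ m} =>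
        ∃ e : Equiv.Perm D,
          (ψ : FreeSemigroup D →ₙ* FreeSemigroup D).comp (FreeSemigroup.map ⇑e)
            = (FreeSemigroup.map ⇑e).comp
                (φ : FreeSemigroup D →ₙ* FreeSemigroup D)))
      = Fintype.card (Quotient (MulAction.orbitRel (Equiv.Perm D)
          {φ : FreeSemigroup D →ₙ* FreeSemigroup D //
            ∀ d : D, (φ (FreeSemigroup.of d)).length ≤ m})) := by
    rw [← Nat.card_eq_fintype_card]
    apply Nat.card_congr
    apply Quot.congrRight
    intro a b
    have h1 : (∃ e : Equiv.Perm D, e • a = b) ↔ (∃ e : Equiv.Perm D, e • b = a) :=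
      ⟨fun ⟨e, h⟩ => ⟨e⁻¹, by rw [← h, inv_smul_smul]⟩,
       fun ⟨e, h⟩ => ⟨e⁻¹, by rw [← h, inv_smul_smul]⟩⟩
    constructor
    · rintro ⟨e, he⟩
      obtain ⟨e', he'⟩ := h1.1 ⟨e, (smul_eq_iff m e a b).2 he.symm⟩
      exact (MulAction.orbitRel_apply).2 (MulAction.mem_orbit_iff.2 ⟨e', he'⟩)
    · intro h
      obtain ⟨e', he'⟩ := MulAction.mem_orbit_iff.1 ((MulAction.orbitRel_apply).1 h)
      obtain ⟨e, he⟩ := h1.2 ⟨e', he'⟩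
      exact ⟨e, ((smul_eq_iff m e a b).1 he).symm⟩
  set N : Equiv.Perm D → ℕ := fun e => ((fullCycleType e).map (fun ℓ =>
      ∑ k ∈ Finset.Icc 1 m, (∑ j ∈ ℓ.divisors, j * cycleCount e j) ^ k)).prod with hN
  have hburn : Nat.card (Quot (fun φ ψ : {φ : FreeSemigroup D →ₙ* FreeSemigroup D //
          ∀ d : D, (φ (FreeSemigroup.of d)).length ≤ m} =>
        ∃ e : Equiv.Perm D,
          (ψ : FreeSemigroup D →ₙ* FreeSemigroup D).comp (FreeSemigroup.map ⇑e)
            = (FreeSemigroup.map ⇑e).comp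
                (φ : FreeSemigroup D →ₙ* FreeSemigroup D))) * n.factorial
      = ∑ e : Equiv.Perm D, N e := by
    rw [hquot, ← hcard, ← Fintype.card_perm, ← hb]
    refine Finset.sum_congr rfl ?_
    intro e _
    rw [← Nat.card_eq_fintype_card]
    exact card_fixedBy_eq m hm e
  -- group permutations by cycle type
  set idx : Equiv.Perm D → Fin (Fintype.card (Nat.Partition n)) :=
    fun e => (hall e).choose with hidxdef
  have hidx : ∀ e, fullCycleType e = fullCycleType (g (idx e)) := fun e => (hall e).choose_spec
  have hNtype : ∀ e f : Equiv.Perm D, fullCycleType e = fullCycleType f → N e = N f := by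
    intro e f h
    simp only [hN, cycleCount]
    rw [h]
  have hfilter : ∀ r, univ.filter (fun e => idx e = r)
      = univ.filter (fun e : Equiv.Perm D => fullCycleType e = fullCycleType (g r)) := by
    intro r
    ext e
    simp only [mem_filter, mem_univ, true_and]
    constructor
    · rintro rfl; exact hidx e
    · intro h
      by_contra hne
      exact hdistinct _ _ hne ((hidx e).symm.trans h)
  have hgroup : ∑ e : Equiv.Perm D, N e
      = ∑ r : Fin (Fintype.card (Nat.Partition n)),
          (Nat.card {h : Equiv.Perm D // fullCycleType h = fullCycleType (g r)}) * N (g r) := by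
    rw [← Finset.sum_fiberwise univ idx N]
    refine Finset.sum_congr rfl ?_
    intro r _
    rw [hfilter r]
    rw [Finset.sum_congr rfl (fun e he => hNtype e (g r) (mem_filter.1 he).2)]
    rw [Finset.sum_const, smul_eq_mul]
    congr 1
    rw [Nat.card_eq_fintype_card, Fintype.card_subtype]
  have hnat := hburn.trans hgroup
  have hne : (n.factorial : ℚ) ≠ 0 := Nat.cast_ne_zero.2 (Nat.factorial_ne_zero n)
  rw [one_div, inv_mul_eq_div, eq_div_iff hne]
  exact_mod_cast hnat
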